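/- Let F be a finite field with q = |F| elements, let Φ be a weighted alphabet with A(n) = |{a ∈ Φ : w(a) ≤ n}|, and let n ≤ N be natural numbers. Consider the action of GL(N,F) on functions g : F^N → Φ induced by its action on F^N. Then the number b_n of GL(N,F)-orbits on functions of total weight n satisfies b_n ≤ A(n)^n · (n+1) · q^{⌊n²/4⌋}. -/

import Mathlib

open Matrix MulAction Pointwise

/-- The action of `GL(N,F)` on `F^N` by matrix-vector multiplication. -/
instance glVecAction {F : Type*} [Field F] {N : ℕ} :
    MulAction (GL (Fin N) F) (Fin N → F) where
  smul g v := (g : Matrix (Fin N) (Fin N) F).mulVec v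
  one_smul v := by
    show ((1 : GL (Fin N) F) : Matrix (Fin N) (Fin N) F).mulVec v = v
    simp
  mul_smul g h v := by
    show ((g * h : GL (Fin N) F) : Matrix (Fin N) (Fin N) F).mulVec v
      = (g : Matrix (Fin N) (Fin N) F).mulVec ((h : Matrix (Fin N) (Fin N) F).mulVec v)
    simp [Matrix.mulVec_mulVec]

/-- The induced action of `GL(N,F)` on functions `F^N → Φ`, `(g • f) v = f (g⁻¹ • v)`. -/
instance glFunAction {F : Type*} [Field F] {N : ℕ} {Φ : Type*} :
    MulAction (GL (Fin N) F) ((Fin N → F) → Φ) where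
  smul g f := fun v => f (g⁻¹ • v)
  one_smul f := by
    show (fun v => f ((1 : GL (Fin N) F)⁻¹ • v)) = f
    funext v; simp
  mul_smul g h f := by
    show (fun v => f ((g * h)⁻¹ • v))
      = fun v => (fun u => f (h⁻¹ • u)) (g⁻¹ • v)
    funext v; simp [_root_.mul_inv_rev, SemigroupAction.mul_smul]

/-- The number of orbits of a `G`-action meeting a set `P` of states; for a `G`-invariant
`P` this is the number of orbits of `G` on `P`. -/
noncomputable def numOrbitsOn (G : Type*) {X : Type*} [Group G] [MulAction G X]
    (P : Set X) : ℕ :=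
  Nat.card (Quotient.mk (MulAction.orbitRel G X) '' P)

namespace GlBnAux
variable {F : Type*} [Field F] [Fintype F] [DecidableEq F] {Φ : Type*}

noncomputable def wtrunc (w : Φ → ℕ) (vac : Φ) (n : ℕ) (hv : w vac ≤ n) (a : Φ) :
    {a : Φ | w a ≤ n} :=
  if h : w a ≤ n then ⟨a, h⟩ else ⟨vac, hv⟩

lemma wtrunc_coe (w : Φ → ℕ) (vac : Φ) (n : ℕ) (hv : w vac ≤ n) {a : Φ} (ha : w a ≤ n) :
    (wtrunc w vac n hv a : Φ) = a := by simp [wtrunc, ha]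

lemma wtrunc_inj (w : Φ → ℕ) (vac : Φ) (n : ℕ) (hv : w vac ≤ n) {a b : Φ}
    (ha : w a ≤ n) (hb : w b ≤ n) (h : wtrunc w vac n hv a = wtrunc w vac n hv b) : a = b := by
  have := congrArg Subtype.val h
  rwa [wtrunc_coe w vac n hv ha, wtrunc_coe w vac n hv hb] at this

noncomputable def vord (α : Type*) [Fintype α] : LinearOrder α :=
  LinearOrder.lift' (Fintype.equivFin α) (Fintype.equivFin α).injective

open Classical in
noncomputable def glEnc (w : Φ → ℕ) (vac : Φ) (n N k : ℕ) (hv : w vac ≤ n) (hkN : k ≤ N)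
    (f : (Fin N → F) → Φ) :
    (Fin k → {a : Φ | w a ≤ n}) × (Fin (n - k) → (Fin k → F) × {a : Φ | w a ≤ n}) :=
  letI : LinearOrder (Fin N → F) := vord _
  let T : Finset (Fin N → F) :=
    (Finset.univ.filter fun v => f v ≠ vac) \
      (Finset.univ.image fun i : Fin k => Pi.single (Fin.castLE hkN i) (1 : F))
  ⟨fun i => wtrunc w vac n hv (f (Pi.single (Fin.castLE hkN i) 1)),
   fun j => if h : (j : ℕ) < T.card
     then (fun i : Fin k => T.orderEmbOfFin rfl ⟨j, h⟩ (Fin.castLE hkN i),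
           wtrunc w vac n hv (f (T.orderEmbOfFin rfl ⟨j, h⟩)))
     else (0, ⟨vac, hv⟩)⟩

lemma single_inj {N k : ℕ} (hkN : k ≤ N) :
    Function.Injective (fun i : Fin k => (Pi.single (Fin.castLE hkN i) (1 : F) : Fin N → F)) := by
  intro i i' h
  by_contra hne
  have hcc : Fin.castLE hkN i ≠ Fin.castLE hkN i' := fun hc => hne (Fin.castLE_injective hkN hc)
  have := congrFun h (Fin.castLE hkN i)
  simp only at this
  rw [Pi.single_eq_same, Pi.single_eq_of_ne hcc] at this
  exact one_ne_zero this

open Classical in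
lemma glEnc_key (w : Φ → ℕ) (vac : Φ) (n N k : ℕ) (hv : w vac ≤ n) (hkN : k ≤ N)
    (f₁ f₂ : (Fin N → F) → Φ)
    (hw₁ : ∀ v, w (f₁ v) ≤ n) (hw₂ : ∀ v, w (f₂ v) ≤ n)
    (hn₂ : ∀ v, f₂ v ≠ vac → ∀ i : Fin N, k ≤ (i : ℕ) → v i = 0)
    (hb₁ : ∀ i : Fin k, f₁ (Pi.single (Fin.castLE hkN i) 1) ≠ vac)
    (hc₁ : (Finset.univ.filter fun v => f₁ v ≠ vac).card ≤ n)
    (hEnc : glEnc w vac n N k hv hkN f₁ = glEnc w vac n N k hv hkN f₂)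
    (v : Fin N → F)
    (hvz : ∀ i : Fin N, k ≤ (i : ℕ) → v i = 0)
    (hvb : ∀ i : Fin k, v ≠ Pi.single (Fin.castLE hkN i) 1)
    (hv1 : f₁ v ≠ vac) :
    f₂ v = f₁ v := by
  letI : LinearOrder (Fin N → F) := vord _
  set B : Finset (Fin N → F) :=
      Finset.univ.image fun i : Fin k => Pi.single (Fin.castLE hkN i) (1 : F) with hB
  set T₁ : Finset (Fin N → F) := (Finset.univ.filter fun v => f₁ v ≠ vac) \ B with hT₁
  set T₂ : Finset (Fin N → F) := (Finset.univ.filter fun v => f₂ v ≠ vac) \ B with hT₂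
  have hT1card : T₁.card ≤ n - k := by
    have hBsub : B ⊆ Finset.univ.filter fun v => f₁ v ≠ vac := by
      intro x hx
      rw [hB, Finset.mem_image] at hx
      obtain ⟨i, -, rfl⟩ := hx
      exact Finset.mem_filter.mpr ⟨Finset.mem_univ _, hb₁ i⟩
    have hBcard : B.card = k := by
      rw [hB, Finset.card_image_of_injective _ (single_inj hkN), Finset.card_univ,
        Fintype.card_fin]
    rw [hT₁, Finset.card_sdiff_of_subset hBsub, hBcard]
    omega
  have hvT1 : v ∈ T₁ := by
    rw [hT₁, Finset.mem_sdiff]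
    refine ⟨Finset.mem_filter.mpr ⟨Finset.mem_univ _, hv1⟩, ?_⟩
    rw [hB, Finset.mem_image]
    rintro ⟨i, -, hi⟩
    exact hvb i hi.symm
  obtain ⟨j, hj⟩ : ∃ j : Fin T₁.card, T₁.orderEmbOfFin rfl j = v := by
    have : v ∈ Set.range (T₁.orderEmbOfFin rfl) := by
      rw [Finset.range_orderEmbOfFin]
      exact_mod_cast hvT1
    exact this
  have hjn : (j : ℕ) < n - k := lt_of_lt_of_le j.isLt hT1card
  have h2 := congrFun (congrArg Prod.snd hEnc) ⟨j, hjn⟩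
  simp only [glEnc] at h2
  rw [dif_pos (show ((⟨(j : ℕ), hjn⟩ : Fin (n - k)) : ℕ) < T₁.card from j.isLt)] at h2
  by_cases hj2 : ((⟨(j : ℕ), hjn⟩ : Fin (n - k)) : ℕ) < T₂.card
  · rw [dif_pos hj2] at h2
    have h2a := congrArg Prod.fst h2
    have h2b := congrArg Prod.snd h2
    simp only [Fin.eta] at h2a h2b
    set u := T₂.orderEmbOfFin rfl ⟨(j : ℕ), hj2⟩ with hu
    have huT2 : u ∈ T₂ := Finset.orderEmbOfFin_mem T₂ rfl _
    have hu2 : f₂ u ≠ vac := (Finset.mem_filter.mp (Finset.mem_sdiff.mp huT2).1).2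
    have huz : ∀ i : Fin N, k ≤ (i : ℕ) → u i = 0 := hn₂ u hu2
    have huv : u = v := by
      funext i
      by_cases hik : (i : ℕ) < k
      · have h3 := congrFun h2a ⟨(i : ℕ), hik⟩
        simp only [Fin.castLE_mk, Fin.eta] at h3
        rw [hj] at h3
        exact h3.symm
      · rw [huz i (le_of_not_gt hik), hvz i (le_of_not_gt hik)]
    rw [hj, huv] at h2b
    exact (wtrunc_inj w vac n hv (hw₁ v) (hw₂ v) h2b).symm
  · rw [dif_neg hj2] at h2
    have h2b := congrArg Prod.snd h2
    simp only [Fin.eta] at h2b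
    rw [hj] at h2b
    have hval := congrArg Subtype.val h2b
    rw [wtrunc_coe w vac n hv (hw₁ v)] at hval
    exact absurd hval hv1
open Classical in
lemma glEnc_inj (w : Φ → ℕ) (vac : Φ) (n N k : ℕ) (hv : w vac ≤ n) (hkN : k ≤ N)
    (f₁ f₂ : (Fin N → F) → Φ)
    (hw₁ : ∀ v, w (f₁ v) ≤ n) (hw₂ : ∀ v, w (f₂ v) ≤ n)
    (hn₁ : ∀ v, f₁ v ≠ vac → ∀ i : Fin N, k ≤ (i : ℕ) → v i = 0)
    (hn₂ : ∀ v, f₂ v ≠ vac → ∀ i : Fin N, k ≤ (i : ℕ) → v i = 0)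
    (hb₁ : ∀ i : Fin k, f₁ (Pi.single (Fin.castLE hkN i) 1) ≠ vac)
    (hb₂ : ∀ i : Fin k, f₂ (Pi.single (Fin.castLE hkN i) 1) ≠ vac)
    (hc₁ : (Finset.univ.filter fun v => f₁ v ≠ vac).card ≤ n)
    (hc₂ : (Finset.univ.filter fun v => f₂ v ≠ vac).card ≤ n)
    (hEnc : glEnc w vac n N k hv hkN f₁ = glEnc w vac n N k hv hkN f₂) :
    f₁ = f₂ := by
  funext v
  by_cases h0 : ∀ i : Fin N, k ≤ (i : ℕ) → v i = 0
  · by_cases hbas : ∃ i : Fin k, v = Pi.single (Fin.castLE hkN i) 1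
    · obtain ⟨i, rfl⟩ := hbas
      have h1 := congrFun (congrArg Prod.fst hEnc) i
      simp only [glEnc] at h1
      exact wtrunc_inj w vac n hv (hw₁ _) (hw₂ _) h1
    · push_neg at hbas
      by_cases hv1 : f₁ v = vac
      · by_cases hv2 : f₂ v = vac
        · rw [hv1, hv2]
        · exact glEnc_key w vac n N k hv hkN f₂ f₁ hw₂ hw₁ hn₁ hb₂ hc₂ hEnc.symm v h0 hbas hv2
      · exact (glEnc_key w vac n N k hv hkN f₁ f₂ hw₁ hw₂ hn₂ hb₁ hc₁ hEnc v h0 hbas hv1).symm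
  · push_neg at h0
    obtain ⟨i, hki, hvi⟩ := h0
    have e1 : f₁ v = vac := by
      by_contra h
      exact hvi (hn₁ v h i hki)
    have e2 : f₂ v = vac := by
      by_contra h
      exact hvi (hn₂ v h i hki)
    rw [e1, e2]


set_option maxHeartbeats 1000000 in
lemma exists_normal (w : Φ → ℕ) (vac : Φ) {N n : ℕ} (hn : n ≤ N)
    (f : (Fin N → F) → Φ)
    (hcard : Nat.card {v : Fin N → F | f v ≠ vac} ≤ n) :
    ∃ k, k ≤ n ∧ ∃ γ : GL (Fin N) F,
      (∀ v : Fin N → F, f ((γ⁻¹ : GL (Fin N) F) • v) ≠ vac →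
        ∀ i : Fin N, k ≤ (i : ℕ) → v i = 0) ∧
      (∀ i : Fin N, (i : ℕ) < k →
        f ((γ⁻¹ : GL (Fin N) F) • (Pi.single i 1 : Fin N → F)) ≠ vac) := by
  classical
  set S : Set (Fin N → F) := {v | f v ≠ vac} with hS
  obtain ⟨bs, hbsS, hbspan, hbli⟩ := exists_linearIndependent F S
  haveI : Fintype bs := (Set.toFinite bs).fintype
  set k := Fintype.card bs with hk
  -- k ≤ n
  have hkn : k ≤ n := by
    have h1 : Nat.card bs ≤ Nat.card S := Nat.card_le_card_of_injective
      (Set.inclusion hbsS) (Set.inclusion_injective hbsS)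
    simp only [Nat.card_eq_fintype_card] at h1
    have h3 : Nat.card S = Fintype.card S := Nat.card_eq_fintype_card
    omega
  have hkN : k ≤ N := le_trans hkn hn
  refine ⟨k, hkn, ?_⟩
  -- basis of the span from bs
  set ec : bs ≃ Fin k := Fintype.equivFin bs with hec
  set bf : Fin k → (Fin N → F) := fun i => (ec.symm i : Fin N → F) with hbf
  have hbf_li : LinearIndependent F bf := hbli.comp ec.symm ec.symm.injective
  have hbf_range : Set.range bf = bs := by
    rw [hbf]
    have : (fun i => (ec.symm i : Fin N → F)) = Subtype.val ∘ ec.symm := rfl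
    rw [this, Set.range_comp, Equiv.range_eq_univ, Set.image_univ, Subtype.range_coe]
  set W : Submodule F (Fin N → F) := Submodule.span F (Set.range bf) with hW
  have hSW : S ⊆ (W : Set (Fin N → F)) := by
    rw [hW, hbf_range, hbspan]
    exact Submodule.subset_span
  have hfrW : Module.finrank F W = k := by
    rw [hW, finrank_span_eq_card hbf_li, Fintype.card_fin]
  obtain ⟨W', hcompl⟩ := Submodule.exists_isCompl W
  have hfrV : Module.finrank F (Fin N → F) = N := by
    rw [Module.finrank_pi, Fintype.card_fin]
  have hfrW' : Module.finrank F W' = N - k := by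
    have := Submodule.finrank_add_eq_of_isCompl hcompl
    omega
  set bW : Module.Basis (Fin k) F W := Module.Basis.span hbf_li with hbW
  set bW' : Module.Basis (Fin (N - k)) F W' := (Module.finBasis F W').reindex (finCongr hfrW') with hbW'
  set B0 : Module.Basis (Fin k ⊕ Fin (N - k)) F (Fin N → F) :=
    (bW.prod bW').map (Submodule.prodEquivOfIsCompl _ _ hcompl) with hB0
  set eIdx : (Fin k ⊕ Fin (N - k)) ≃ Fin N :=
    finSumFinEquiv.trans (finCongr (by omega)) with heIdx
  set B : Module.Basis (Fin N) F (Fin N → F) := B0.reindex eIdx with hB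
  have hBl : ∀ i : Fin k, B (eIdx (Sum.inl i)) = bf i := by
    intro i
    rw [hB, Module.Basis.reindex_apply, Equiv.symm_apply_apply, hB0, Module.Basis.map_apply,
      Module.Basis.prod_apply]
    simp only [Submodule.coe_prodEquivOfIsCompl, Sum.elim_inl, LinearMap.coprod_apply,
      Function.comp_apply, LinearMap.coe_inl]
    have h4 := congrArg (fun (φ : (↥W × ↥W') →ₗ[F] (Fin N → F)) => φ (bW i, 0))
      (Submodule.coe_prodEquivOfIsCompl W W' hcompl)
    simp only [LinearMap.coprod_apply, Submodule.coe_subtype, map_zero, add_zero] at h4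
    exact h4.trans (congrArg Subtype.val (Module.Basis.span_apply hbf_li i))
  have heIdxval : ∀ i : Fin k, ((eIdx (Sum.inl i)) : ℕ) = (i : ℕ) := by
    intro i
    simp [heIdx]
  -- the coordinate equivalence
  set g : (Fin N → F) ≃ₗ[F] (Fin N → F) := B.equivFun with hg
  have keyA : ∀ u ∈ W, ∀ i : Fin N, k ≤ (i : ℕ) → g u i = 0 := by
    intro u hu i hi
    have hrange : Set.range bf = ⇑B '' {j : Fin N | (j : ℕ) < k} := by
      ext x
      constructor
      · rintro ⟨i, rfl⟩
        exact ⟨eIdx (Sum.inl i), by simp [heIdxval i], hBl i⟩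
      · rintro ⟨j, hj, rfl⟩
        have : j = eIdx (Sum.inl ⟨(j : ℕ), hj⟩) := by
          apply Fin.ext
          rw [heIdxval]
        rw [this, hBl]
        exact ⟨_, rfl⟩
    rw [hW, hrange] at hu
    have hsupp := (Module.Basis.mem_span_image B).mp hu
    have : i ∉ (B.repr u).support := by
      intro hmem
      have := hsupp hmem
      simp only [Set.mem_setOf_eq] at this
      omega
    have hz : B.repr u i = 0 := Finsupp.notMem_support_iff.mp this
    rw [hg]
    rw [Module.Basis.equivFun_apply]
    exact hz
  have keyB : ∀ i : Fin N, (h : (i : ℕ) < k) → g.symm (Pi.single i 1) = bf ⟨(i : ℕ), h⟩ := by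
    intro i h
    have hji : eIdx (Sum.inl ⟨(i : ℕ), h⟩) = i := by
      apply Fin.ext
      rw [heIdxval]
    have hgB : g (bf ⟨(i : ℕ), h⟩) = Pi.single i 1 := by
      rw [← hBl ⟨(i : ℕ), h⟩, hji]
      funext i'
      rw [hg]
      rw [Module.Basis.equivFun_self]
      rw [Pi.single_apply]
      exact if_congr eq_comm rfl rfl
    rw [← hgB, LinearEquiv.symm_apply_apply]
  -- build the GL element
  have hcomp1 : ((g : (Fin N → F) →ₗ[F] (Fin N → F)).comp (g.symm : (Fin N → F) →ₗ[F] (Fin N → F))) = LinearMap.id := by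
    ext v
    simp
  have hcomp2 : ((g.symm : (Fin N → F) →ₗ[F] (Fin N → F)).comp (g : (Fin N → F) →ₗ[F] (Fin N → F))) = LinearMap.id := by
    ext v
    simp
  set γ : GL (Fin N) F :=
    ⟨LinearMap.toMatrix' (g : (Fin N → F) →ₗ[F] (Fin N → F)), LinearMap.toMatrix' (g.symm : (Fin N → F) →ₗ[F] (Fin N → F)),
     by rw [← LinearMap.toMatrix'_comp, hcomp1, LinearMap.toMatrix'_id],
     by rw [← LinearMap.toMatrix'_comp, hcomp2, LinearMap.toMatrix'_id]⟩ with hγ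
  have hγinv : ∀ v : Fin N → F, (γ⁻¹ : GL (Fin N) F) • v = g.symm v := by
    intro v
    show ((γ⁻¹ : GL (Fin N) F) : Matrix (Fin N) (Fin N) F).mulVec v = g.symm v
    have : ((γ⁻¹ : GL (Fin N) F) : Matrix (Fin N) (Fin N) F)
        = LinearMap.toMatrix' (g.symm : (Fin N → F) →ₗ[F] (Fin N → F)) := rfl
    rw [this, ← Matrix.toLin'_apply, Matrix.toLin'_toMatrix']
    rfl
  refine ⟨γ, ?_, ?_⟩
  · intro v hfv i hi
    rw [hγinv] at hfv
    have hu : g.symm v ∈ S := hfv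
    have huW : g.symm v ∈ W := hSW hu
    have := keyA (g.symm v) huW i hi
    rwa [LinearEquiv.apply_symm_apply] at this
  · intro i hi
    rw [hγinv, keyB i hi]
    have : bf ⟨(i : ℕ), hi⟩ ∈ bs := by
      rw [← hbf_range]
      exact ⟨_, rfl⟩
    exact hbsS this

end GlBnAux

namespace GlBnAux

lemma mul_sub_le_sq_div_four (k n : ℕ) (hk : k ≤ n) : k * (n - k) ≤ n ^ 2 / 4 := by
  rw [Nat.le_div_iff_mul_le (by norm_num)]
  obtain ⟨m, rfl⟩ : ∃ m, n = k + m := ⟨n - k, by omega⟩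
  have h2 := two_mul_le_add_sq k m
  have hmk : k + m - k = m := by omega
  rw [hmk]
  nlinarith

lemma weight_smul {F : Type*} [Field F] [Fintype F] [DecidableEq F] {Φ : Type*}
    (w : Φ → ℕ) {N : ℕ} (γ : GL (Fin N) F) (f : (Fin N → F) → Φ) :
    ∑ v : Fin N → F, w ((γ • f) v) = ∑ v : Fin N → F, w (f v) :=
  Fintype.sum_equiv (MulAction.toPerm (γ⁻¹ : GL (Fin N) F)) _ _ (fun _ => rfl)


end GlBnAux

theorem gl_bn_le {F : Type*} [Field F] [Fintype F] [DecidableEq F] {Φ : Type*}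
    (w : Φ → ℕ) (vac : Φ)
    (hvac : ∀ a : Φ, w a = 0 ↔ a = vac)
    (hfin : ∀ n : ℕ, {a : Φ | w a ≤ n}.Finite)
    (N n : ℕ) (hn : n ≤ N) :
    numOrbitsOn (GL (Fin N) F) {f : (Fin N → F) → Φ | ∑ v : Fin N → F, w (f v) = n}
      ≤ Nat.card {a : Φ | w a ≤ n} ^ n * ((n + 1) * Fintype.card F ^ (n ^ 2 / 4)) := by
  classical
  have hv : w vac ≤ n := by
    rw [(hvac vac).mpr rfl]
    omega
  haveI : Finite ↥{a : Φ | w a ≤ n} := (hfin n).to_subtype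
  haveI fPhi : Fintype ↥{a : Φ | w a ≤ n} := (hfin n).fintype
  set P : Set ((Fin N → F) → Φ) := {f | ∑ v : Fin N → F, w (f v) = n} with hP
  have hwle : ∀ f ∈ P, ∀ v : Fin N → F, w (f v) ≤ n := by
    intro f hf v
    rw [hP, Set.mem_setOf_eq] at hf
    calc w (f v) ≤ ∑ u : Fin N → F, w (f u) :=
          Finset.single_le_sum (f := fun u : Fin N → F => w (f u))
            (fun i _ => Nat.zero_le _) (Finset.mem_univ v)
      _ = n := hf
  have hcardP : ∀ f ∈ P, (Finset.univ.filter fun v : Fin N → F => f v ≠ vac).card ≤ n := by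
    intro f hf
    have h1 : (Finset.univ.filter fun v : Fin N → F => f v ≠ vac).card
        = ∑ _v ∈ Finset.univ.filter (fun v : Fin N → F => f v ≠ vac), 1 := by simp
    have h2 : ∑ _v ∈ Finset.univ.filter (fun v : Fin N → F => f v ≠ vac), 1
        ≤ ∑ v ∈ Finset.univ.filter (fun v : Fin N → F => f v ≠ vac), w (f v) :=
      Finset.sum_le_sum (fun v hvm => Nat.one_le_iff_ne_zero.mpr
        (fun h0 => (Finset.mem_filter.mp hvm).2 ((hvac _).mp h0)))
    have h3 : ∑ v ∈ Finset.univ.filter (fun v : Fin N → F => f v ≠ vac), w (f v)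
        ≤ ∑ v : Fin N → F, w (f v) :=
      Finset.sum_le_sum_of_subset (Finset.filter_subset _ _)
    rw [hP, Set.mem_setOf_eq] at hf
    omega
  have hrep : ∀ x : ↥(Quotient.mk (MulAction.orbitRel (GL (Fin N) F) ((Fin N → F) → Φ)) '' P),
      ∃ (kk : Fin (n + 1)) (f' : (Fin N → F) → Φ), f' ∈ P ∧
        Quotient.mk (MulAction.orbitRel (GL (Fin N) F) ((Fin N → F) → Φ)) f' = (x : _) ∧
        (∀ v : Fin N → F, f' v ≠ vac → ∀ i : Fin N, (kk : ℕ) ≤ (i : ℕ) → v i = 0) ∧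
        (∀ i : Fin N, (i : ℕ) < (kk : ℕ) → f' (Pi.single i 1) ≠ vac) := by
    rintro ⟨x, f, hfP, rfl⟩
    have hsupp : Nat.card {v : Fin N → F | f v ≠ vac} ≤ n := by
      rw [Nat.card_eq_fintype_card, Fintype.card_subtype]
      exact hcardP f hfP
    obtain ⟨k, hkn, γ, hnorm, hbas⟩ := GlBnAux.exists_normal w vac hn f hsupp
    refine ⟨⟨k, by omega⟩, γ • f, ?_, ?_, hnorm, hbas⟩
    · rw [hP, Set.mem_setOf_eq]
      rw [GlBnAux.weight_smul]
      exact hfP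
    · exact Quotient.sound (MulAction.mem_orbit f γ)
  choose kf rf hmemP hmk hnormc hbasc using hrep
  set A := Nat.card ↥{a : Φ | w a ≤ n} with hA
  set q := Fintype.card F with hq
  set T := (Σ kk : Fin (n + 1),
    ((Fin (kk : ℕ) → ↥{a : Φ | w a ≤ n}) ×
      (Fin (n - (kk : ℕ)) → (Fin (kk : ℕ) → F) × ↥{a : Φ | w a ≤ n}))) with hT
  have hkNle : ∀ kk : Fin (n + 1), (kk : ℕ) ≤ N :=
    fun kk => le_trans (Nat.lt_succ_iff.mp kk.isLt) hn
  set E : ↥(Quotient.mk (MulAction.orbitRel (GL (Fin N) F) ((Fin N → F) → Φ)) '' P) → T :=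
    fun x => ⟨kf x, GlBnAux.glEnc w vac n N (kf x) hv (hkNle (kf x)) (rf x)⟩ with hE
  have key : ∀ (a b : Fin (n + 1)) (f₁ f₂ : (Fin N → F) → Φ), f₁ ∈ P → f₂ ∈ P →
      (∀ v : Fin N → F, f₁ v ≠ vac → ∀ i : Fin N, (a : ℕ) ≤ (i : ℕ) → v i = 0) →
      (∀ v : Fin N → F, f₂ v ≠ vac → ∀ i : Fin N, (b : ℕ) ≤ (i : ℕ) → v i = 0) →
      (∀ i : Fin N, (i : ℕ) < (a : ℕ) → f₁ (Pi.single i 1) ≠ vac) →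
      (∀ i : Fin N, (i : ℕ) < (b : ℕ) → f₂ (Pi.single i 1) ≠ vac) →
      (⟨a, GlBnAux.glEnc w vac n N a hv (hkNle a) f₁⟩ : T)
        = ⟨b, GlBnAux.glEnc w vac n N b hv (hkNle b) f₂⟩ →
      f₁ = f₂ := by
    intro a b f₁ f₂ h₁ h₂ hn₁ hn₂ hb₁ hb₂ h
    injection h with h1 h2
    subst h1
    have h3 := eq_of_heq h2
    refine GlBnAux.glEnc_inj w vac n N a hv (hkNle a) f₁ f₂
      (hwle f₁ h₁) (hwle f₂ h₂) hn₁ hn₂ ?_ ?_ (hcardP f₁ h₁) (hcardP f₂ h₂) h3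
    · intro i
      exact hb₁ (Fin.castLE (hkNle a) i) (by simpa using i.isLt)
    · intro i
      exact hb₂ (Fin.castLE (hkNle a) i) (by simpa using i.isLt)
  have hEinj : Function.Injective E := by
    intro x y hxy
    have hr : rf x = rf y :=
      key (kf x) (kf y) (rf x) (rf y) (hmemP x) (hmemP y) (hnormc x) (hnormc y)
        (hbasc x) (hbasc y) hxy
    have : (x : Quotient (MulAction.orbitRel (GL (Fin N) F) ((Fin N → F) → Φ)))
        = (y : Quotient (MulAction.orbitRel (GL (Fin N) F) ((Fin N → F) → Φ))) := by
      rw [← hmk x, ← hmk y, hr]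
    exact Subtype.ext this
  have hle1 : numOrbitsOn (GL (Fin N) F) P ≤ Nat.card T :=
    Nat.card_le_card_of_injective E hEinj
  have hcount : Nat.card T = ∑ kk : Fin (n + 1), A ^ (kk : ℕ) * (q ^ (kk : ℕ) * A) ^ (n - (kk : ℕ)) := by
    rw [hT, Nat.card_eq_fintype_card, Fintype.card_sigma]
    refine Finset.sum_congr rfl ?_
    intro kk _
    simp only [Fintype.card_prod, Fintype.card_fun, Fintype.card_fin]
    rw [hA, hq, Nat.card_eq_fintype_card]
  have hterm : ∀ kk : Fin (n + 1),
      A ^ (kk : ℕ) * (q ^ (kk : ℕ) * A) ^ (n - (kk : ℕ)) ≤ A ^ n * q ^ (n ^ 2 / 4) := by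
    intro kk
    have ha : (kk : ℕ) ≤ n := Nat.lt_succ_iff.mp kk.isLt
    calc A ^ (kk : ℕ) * (q ^ (kk : ℕ) * A) ^ (n - (kk : ℕ))
        = (A ^ (kk : ℕ) * A ^ (n - (kk : ℕ))) * q ^ ((kk : ℕ) * (n - (kk : ℕ))) := by
          rw [mul_pow, ← pow_mul]
          ring
      _ = A ^ n * q ^ ((kk : ℕ) * (n - (kk : ℕ))) := by
          rw [← pow_add, Nat.add_sub_cancel' ha]
      _ ≤ A ^ n * q ^ (n ^ 2 / 4) := by
          refine Nat.mul_le_mul_left _ (Nat.pow_le_pow_right Fintype.card_pos ?_)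
          exact GlBnAux.mul_sub_le_sq_div_four (kk : ℕ) n ha
  have hsum : ∑ kk : Fin (n + 1), A ^ (kk : ℕ) * (q ^ (kk : ℕ) * A) ^ (n - (kk : ℕ))
      ≤ (n + 1) * (A ^ n * q ^ (n ^ 2 / 4)) := by
    have := Finset.sum_le_card_nsmul Finset.univ
      (fun kk : Fin (n + 1) => A ^ (kk : ℕ) * (q ^ (kk : ℕ) * A) ^ (n - (kk : ℕ)))
      (A ^ n * q ^ (n ^ 2 / 4)) (fun kk _ => hterm kk)
    simpa [Finset.card_univ, mul_comm] using this
  calc numOrbitsOn (GL (Fin N) F) P ≤ Nat.card T := hle1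
    _ = ∑ kk : Fin (n + 1), A ^ (kk : ℕ) * (q ^ (kk : ℕ) * A) ^ (n - (kk : ℕ)) := hcount
    _ ≤ (n + 1) * (A ^ n * q ^ (n ^ 2 / 4)) := hsum
    _ = A ^ n * ((n + 1) * q ^ (n ^ 2 / 4)) := by ring
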